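/- Let L be a positive linear operator with L(1) > 0 pointwise, acting on functions on X, and define P(f) := L(f)/L(1). Suppose ν_x := P*(δ_x) denotes the associated probability measure at x, i.e. ∫ f dν_x = P(f)(x). If Q is a subprobability measure on X × X whose first marginal is dominated by ν_x and whose second marginal is dominated by ν_y, then there exists a coupling π of ν_x and ν_y with π ≥ Q; consequently, for any metric d* ≤ 1 and any set E ⊆ X² with d*(z₁,z₂) ≤ c < 1 on E and Q supported on E, one has W̄(ν_x, ν_y) ≤ 1 − (1−c)·Q(X²). -/

import Mathlib

open MeasureTheory Set

/-- `π` is a coupling of `μ` and `ν`. -/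
def IsCoupling {X : Type*} [MeasurableSpace X]
    (π : Measure (X × X)) (μ ν : Measure X) : Prop :=
  π.map Prod.fst = μ ∧ π.map Prod.snd = ν

/-- Wasserstein-1 distance with respect to a cost function `dstar`. -/
noncomputable def wass {X : Type*} [MeasurableSpace X]
    (dstar : X → X → ℝ) (μ ν : Measure X) : ℝ :=
  sInf {r : ℝ | ∃ π : Measure (X × X), IsProbabilityMeasure π ∧ IsCoupling π μ ν ∧
    r = ∫ p, dstar p.1 p.2 ∂π}


lemma meas_eq_of_le_of_univ_le {X : Type*} [MeasurableSpace X]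
    (μ ν : Measure X) [IsFiniteMeasure ν] (h : μ ≤ ν) (h2 : ν univ ≤ μ univ) : μ = ν := by
  ext s hs
  refine le_antisymm (h s) ?_
  have hμ : μ s + μ sᶜ = μ univ := measure_add_measure_compl hs
  have hν : ν s + ν sᶜ = ν univ := measure_add_measure_compl hs
  have h1 : ν s + ν sᶜ ≤ μ s + ν sᶜ := by
    calc ν s + ν sᶜ = ν univ := hν
    _ ≤ μ univ := h2
    _ = μ s + μ sᶜ := hμ.symm
    _ ≤ μ s + ν sᶜ := add_le_add (le_refl _) (h sᶜ)
  exact (ENNReal.add_le_add_iff_right (measure_ne_top ν sᶜ)).mp h1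

lemma coupling_exists {X : Type*} [MeasurableSpace X]
    (νx νy : Measure X) [IsProbabilityMeasure νx] [IsProbabilityMeasure νy]
    (Q : Measure (X × X)) (hQfin : Q Set.univ ≤ 1)
    (hQ1 : ∀ A : Set X, MeasurableSet A → Q (A ×ˢ Set.univ) ≤ νx A)
    (hQ2 : ∀ A : Set X, MeasurableSet A → Q (Set.univ ×ˢ A) ≤ νy A) :
    ∃ π : Measure (X × X), IsProbabilityMeasure π ∧ IsCoupling π νx νy ∧ Q ≤ π := by
  haveI : IsFiniteMeasure Q := ⟨lt_of_le_of_lt hQfin ENNReal.one_lt_top⟩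
  set Qf := Q.map Prod.fst with hQfdef
  set Qs := Q.map Prod.snd with hQsdef
  haveI : IsFiniteMeasure Qf := by unfold Qf; infer_instance
  haveI : IsFiniteMeasure Qs := by unfold Qs; infer_instance
  have hlef : Qf ≤ νx := by
    rw [Measure.le_iff]
    intro s hs
    rw [hQfdef, Measure.map_apply measurable_fst hs, ← Set.prod_univ]
    exact hQ1 s hs
  have hles : Qs ≤ νy := by
    rw [Measure.le_iff]
    intro s hs
    rw [hQsdef, Measure.map_apply measurable_snd hs, ← Set.univ_prod]
    exact hQ2 s hs
  set α := νx - Qf with hαdef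
  set β := νy - Qs with hβdef
  have hαadd : α + Qf = νx := Measure.sub_add_cancel_of_le hlef
  have hβadd : β + Qs = νy := Measure.sub_add_cancel_of_le hles
  have hQfu : Qf univ = Q univ := by
    rw [hQfdef, Measure.map_apply measurable_fst MeasurableSet.univ]; simp
  have hQsu : Qs univ = Q univ := by
    rw [hQsdef, Measure.map_apply measurable_snd MeasurableSet.univ]; simp
  set m := Q univ with hmdef
  set r := 1 - m with hrdef
  have hαu : α univ = r := by
    rw [hαdef, Measure.sub_apply MeasurableSet.univ hlef, measure_univ, hQfu]
  have hβu : β univ = r := by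
    rw [hβdef, Measure.sub_apply MeasurableSet.univ hles, measure_univ, hQsu]
  rcases eq_or_ne r 0 with hr | hr
  · have hα0 : α = 0 := Measure.measure_univ_eq_zero.mp (by rw [hαu, hr])
    have hβ0 : β = 0 := Measure.measure_univ_eq_zero.mp (by rw [hβu, hr])
    have hm : m = 1 := le_antisymm hQfin (tsub_eq_zero_iff_le.mp hr)
    have hf : Qf = νx := by rw [← hαadd, hα0, zero_add]
    have hs : Qs = νy := by rw [← hβadd, hβ0, zero_add]
    exact ⟨Q, ⟨hm⟩, ⟨hf, hs⟩, le_rfl⟩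
  · have hrtop : r ≠ ⊤ := by
      rw [hrdef]
      exact (lt_of_le_of_lt tsub_le_self ENNReal.one_lt_top).ne
    haveI : IsFiniteMeasure α := ⟨by rw [hαu]; exact hrtop.lt_top⟩
    haveI : IsFiniteMeasure β := ⟨by rw [hβu]; exact hrtop.lt_top⟩
    have hinv : r⁻¹ * r = 1 := ENNReal.inv_mul_cancel hr hrtop
    refine ⟨Q + r⁻¹ • (α.prod β), ?_, ⟨?_, ?_⟩, ?_⟩
    · constructor
      rw [Measure.add_apply, Measure.smul_apply, smul_eq_mul, ← Set.univ_prod_univ,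
        Measure.prod_prod, hαu, hβu, ← mul_assoc, hinv, one_mul, Set.univ_prod_univ]
      exact add_tsub_cancel_of_le hQfin
    · rw [Measure.map_add _ _ measurable_fst, Measure.map_smul, Measure.map_fst_prod,
        hβu, smul_smul, hinv, one_smul, ← hQfdef, add_comm]
      exact hαadd
    · rw [Measure.map_add _ _ measurable_snd, Measure.map_smul, Measure.map_snd_prod,
        hαu, smul_smul, hinv, one_smul, ← hQsdef, add_comm]
      exact hβadd
    · exact Measure.le_add_right le_rfl


/-- A subprobability `Q` whose marginals are dominated by `ν_x`, `ν_y` extends to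
a coupling `π ≥ Q`; if moreover `Q` is supported on a set where the cost
`dstar ≤ c < 1`, then `W̄(ν_x,ν_y) ≤ 1 − (1−c)·Q(X²)`. -/
theorem coupling_completion_and_wasserstein_bound
    {X : Type*} [MetricSpace X] [MeasurableSpace X] [BorelSpace X]
    [CompleteSpace X] [TopologicalSpace.SeparableSpace X]
    (νx νy : Measure X) [IsProbabilityMeasure νx] [IsProbabilityMeasure νy]
    (Q : Measure (X × X)) (hQfin : Q Set.univ ≤ 1)
    (hQ1 : ∀ A : Set X, MeasurableSet A → Q (A ×ˢ Set.univ) ≤ νx A)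
    (hQ2 : ∀ A : Set X, MeasurableSet A → Q (Set.univ ×ˢ A) ≤ νy A)
    (dstar : X → X → ℝ) (hdmeas : Measurable fun p : X × X => dstar p.1 p.2)
    (hd0 : ∀ x y, 0 ≤ dstar x y) (hd1 : ∀ x y, dstar x y ≤ 1)
    (c : ℝ) (hc0 : 0 ≤ c) (hc1 : c < 1)
    (E : Set (X × X)) (hE : MeasurableSet E) (hQE : Q Eᶜ = 0)
    (hEc : ∀ p ∈ E, dstar p.1 p.2 ≤ c) :
    (∃ π : Measure (X × X), IsProbabilityMeasure π ∧ IsCoupling π νx νy ∧ Q ≤ π) ∧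
    wass dstar νx νy ≤ 1 - (1 - c) * (Q Set.univ).toReal := by
  obtain ⟨π, hπprob, hπcoup, hQπ⟩ := coupling_exists νx νy Q hQfin hQ1 hQ2
  refine ⟨⟨π, hπprob, hπcoup, hQπ⟩, ?_⟩
  have hfint : Integrable (fun p : X × X => dstar p.1 p.2) π := by
    refine ⟨hdmeas.aestronglyMeasurable, ?_⟩
    apply HasFiniteIntegral.of_bounded (C := 1)
    filter_upwards with p
    rw [Real.norm_eq_abs, abs_of_nonneg (hd0 _ _)]
    exact hd1 _ _
  have hπE : (π E).toReal + (π Eᶜ).toReal = 1 := by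
    have h := measure_add_measure_compl (μ := π) hE
    rw [measure_univ] at h
    rw [← ENNReal.toReal_add (measure_ne_top _ _) (measure_ne_top _ _), h, ENNReal.toReal_one]
  have hmE : (Q univ).toReal ≤ (π E).toReal := by
    have h1 : Q univ = Q E := by
      have h := measure_add_measure_compl (μ := Q) hE
      rw [hQE, add_zero] at h
      exact h.symm
    rw [h1]
    exact ENNReal.toReal_mono (measure_ne_top _ _) (hQπ E)
  have hint : ∫ p, dstar p.1 p.2 ∂π ≤ 1 - (1 - c) * (Q univ).toReal := by
    have hsplit : (∫ p in E, dstar p.1 p.2 ∂π) + (∫ p in Eᶜ, dstar p.1 p.2 ∂π)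
        = ∫ p, dstar p.1 p.2 ∂π := integral_add_compl hE hfint
    have hE1 : ∫ p in E, dstar p.1 p.2 ∂π ≤ c * (π E).toReal := by
      calc ∫ p in E, dstar p.1 p.2 ∂π ≤ ∫ _ in E, c ∂π :=
            setIntegral_mono_on hfint.integrableOn (integrable_const _) hE
              (fun p hp => hEc p hp)
        _ = (π E).toReal * c := by rw [setIntegral_const, smul_eq_mul, measureReal_def]
        _ = c * (π E).toReal := mul_comm _ _
    have hE2 : ∫ p in Eᶜ, dstar p.1 p.2 ∂π ≤ (π Eᶜ).toReal := by
      calc ∫ p in Eᶜ, dstar p.1 p.2 ∂π ≤ ∫ _ in Eᶜ, (1 : ℝ) ∂π :=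
            setIntegral_mono_on hfint.integrableOn (integrable_const _) hE.compl
              (fun p _ => hd1 _ _)
        _ = (π Eᶜ).toReal := by rw [setIntegral_const, smul_eq_mul, mul_one, measureReal_def]
    nlinarith [hπE, hmE]
  refine le_trans (csInf_le ?_ ⟨π, hπprob, hπcoup, rfl⟩) hint
  refine ⟨0, ?_⟩
  rintro r ⟨π', hp, hc', rfl⟩
  exact integral_nonneg fun p => hd0 _ _
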